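/- For every non-decreasing sequence x : ℕ → ℕ (indexed from 1) and every n ≥ 1, the following identity holds in ℤ: Σ_{k=0}^{n} (−1)^{n − k + 1} · C(n, k) · PF(x; k) · x(k+1)^{n − k} = 0. -/

import Mathlib

def IsPF (x : ℕ → ℕ) {n : ℕ} (f : Fin n → ℕ) : Prop :=
  (∀ i, 1 ≤ f i) ∧
  ∀ k, 1 ≤ k → k ≤ n → k ≤ (Finset.univ.filter (fun i => f i ≤ x k)).card

noncomputable def PF (x : ℕ → ℕ) (n : ℕ) : ℕ :=
  Nat.card {f : Fin n → ℕ // IsPF x f}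

namespace PFAux

open Finset

lemma xmono (x : ℕ → ℕ) (hx : ∀ m, 1 ≤ m → x m ≤ x (m + 1)) :
    ∀ a b, 1 ≤ a → a ≤ b → x a ≤ x b := by
  intro a b ha hab
  induction b with
  | zero => omega
  | succ b ih =>
    rcases Nat.lt_or_ge a (b+1) with h | h
    · exact le_trans (ih (by omega)) (hx b (by omega))
    · have : a = b + 1 := by omega
      subst this; exact le_rfl

/-- The parking property up to level `k`. -/
def Ok (x : ℕ → ℕ) {n : ℕ} (k : ℕ) (f : Fin n → ℕ) : Prop :=
  ∀ j ∈ Finset.Icc 1 k, j ≤ (Finset.univ.filter (fun i => f i ≤ x j)).card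

instance (x : ℕ → ℕ) {n : ℕ} (k : ℕ) (f : Fin n → ℕ) : Decidable (Ok x k f) := by
  unfold Ok; infer_instance

lemma ok_zero (x : ℕ → ℕ) {n : ℕ} (f : Fin n → ℕ) : Ok x 0 f := by
  intro j hj; simp at hj

lemma ok_mono (x : ℕ → ℕ) {n : ℕ} {a b : ℕ} (hab : a ≤ b) {f : Fin n → ℕ}
    (h : Ok x b f) : Ok x a f := by
  intro j hj; exact h j (Finset.mem_Icc.mpr ⟨(Finset.mem_Icc.mp hj).1, le_trans (Finset.mem_Icc.mp hj).2 hab⟩)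

/-- maximal parking level of `f` -/
def lev (x : ℕ → ℕ) {n : ℕ} (f : Fin n → ℕ) : ℕ :=
  (((Finset.range (n+1)).filter (fun k => Ok x k f))).max'
    ⟨0, by simp [Finset.mem_filter, ok_zero]⟩

lemma lev_spec (x : ℕ → ℕ) {n : ℕ} (f : Fin n → ℕ) :
    lev x f ≤ n ∧ Ok x (lev x f) f := by
  have h : lev x f ∈ (Finset.range (n+1)).filter (fun k => Ok x k f) :=
    Finset.max'_mem _ _
  rw [Finset.mem_filter, Finset.mem_range] at h
  exact ⟨by omega, h.2⟩

lemma lev_ge (x : ℕ → ℕ) {n : ℕ} (f : Fin n → ℕ) {k : ℕ} (hk : k ≤ n) (h : Ok x k f) :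
    k ≤ lev x f :=
  Finset.le_max' _ k (by simp [Finset.mem_filter, Finset.mem_range, h]; omega)

/-- characterization of the fibers of `lev`. -/
lemma lev_eq_iff (x : ℕ → ℕ) (hx : ∀ m, 1 ≤ m → x m ≤ x (m + 1)) {n : ℕ}
    (f : Fin n → ℕ) {k : ℕ} (hk : k ≤ n) :
    lev x f = k ↔ Ok x k f ∧ (Finset.univ.filter (fun i => f i ≤ x (k+1))).card = k := by
  constructor
  · rintro rfl
    obtain ⟨hle, hok⟩ := lev_spec x f
    refine ⟨hok, le_antisymm ?_ ?_⟩
    · -- card ≤ lev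
      rcases Nat.lt_or_ge (lev x f) n with hlt | hge
      · -- ¬ Ok (lev+1)
        have hnot : ¬ Ok x (lev x f + 1) f := by
          intro hok'
          have := lev_ge x f (k := lev x f + 1) (by omega) hok'
          omega
        rw [Ok] at hnot
        push_neg at hnot
        obtain ⟨j, hj, hcard⟩ := hnot
        rw [Finset.mem_Icc] at hj
        have : j = lev x f + 1 := by
          by_contra hne
          have hj' : j ∈ Finset.Icc 1 (lev x f) := Finset.mem_Icc.mpr (by omega)
          exact absurd (hok j hj') (by omega)
        subst this
        omega
      · have hn : lev x f = n := by omega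
        calc (Finset.univ.filter (fun i => f i ≤ x (lev x f + 1))).card
            ≤ (Finset.univ : Finset (Fin n)).card := Finset.card_filter_le _ _
          _ = n := by simp
          _ = lev x f := hn.symm
    · -- lev ≤ card
      rcases Nat.eq_zero_or_pos (lev x f) with h0 | hpos
      · simp [h0]
      · calc lev x f ≤ (Finset.univ.filter (fun i => f i ≤ x (lev x f))).card :=
              hok _ (Finset.mem_Icc.mpr ⟨hpos, le_rfl⟩)
          _ ≤ (Finset.univ.filter (fun i => f i ≤ x (lev x f + 1))).card := by
              apply Finset.card_le_card
              intro i hi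
              rw [Finset.mem_filter] at *
              exact ⟨hi.1, le_trans hi.2 (hx _ hpos)⟩
  · rintro ⟨hok, hcard⟩
    have h1 : k ≤ lev x f := lev_ge x f hk hok
    have h2 : lev x f ≤ k := by
      by_contra hlt
      push_neg at hlt
      have hok' : Ok x (lev x f) f := (lev_spec x f).2
      have := hok' (k+1) (Finset.mem_Icc.mpr (by omega))
      omega
    omega

open Classical in
/-- the set of parking functions of length `k` as a finset -/
noncomputable def pfSet (x : ℕ → ℕ) (k : ℕ) : Finset (Fin k → ℕ) :=
  (Fintype.piFinset (fun _ : Fin k => Finset.Icc 1 (x k))).filter (fun f => IsPF x f)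

lemma isPF_le (x : ℕ → ℕ) {k : ℕ} {f : Fin k → ℕ} (h : IsPF x f) (i : Fin k) :
    f i ≤ x k := by
  rcases Nat.eq_zero_or_pos k with h0 | hpos
  · exact absurd i.isLt (by omega)
  · have hc := h.2 k hpos le_rfl
    have : (Finset.univ.filter (fun i => f i ≤ x k)) = Finset.univ := by
      apply Finset.eq_univ_of_card
      have := Finset.card_filter_le (Finset.univ : Finset (Fin k)) (fun i => f i ≤ x k)
      simp only [Finset.card_univ, Fintype.card_fin] at *
      omega
    have := Finset.mem_filter.mp (this ▸ Finset.mem_univ i)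
    exact this.2

lemma PF_eq_card (x : ℕ → ℕ) (k : ℕ) : PF x k = (pfSet x k).card := by
  classical
  have hset : {f : Fin k → ℕ | IsPF x f} = ↑(pfSet x k) := by
    ext f
    simp only [Set.mem_setOf_eq, pfSet, Finset.coe_filter, Fintype.mem_piFinset,
      Finset.mem_Icc, Set.mem_setOf_eq]
    constructor
    · intro h; exact ⟨fun i => ⟨h.1 i, isPF_le x h i⟩, h⟩
    · tauto
  calc PF x k = Nat.card {f : Fin k → ℕ | IsPF x f} := rfl
    _ = Set.ncard {f : Fin k → ℕ | IsPF x f} := Nat.card_coe_set_eq _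
    _ = (pfSet x k).card := by rw [hset, Set.ncard_coe_finset]

/-- transport card of filters along the order iso of a subset containing the filter -/
lemma card_filter_iso {n k : ℕ} (S : Finset (Fin n)) (hS : S.card = k)
    (P : Fin n → Prop) [DecidablePred P] (hsub : ∀ i, P i → i ∈ S) :
    (Finset.univ.filter (fun a : Fin k => P (S.orderIsoOfFin hS a))).card
      = (Finset.univ.filter P).card := by
  apply Finset.card_bij (fun a _ => ((S.orderIsoOfFin hS a : Fin n)))
  · intro a ha
    rw [Finset.mem_filter] at *
    exact ⟨Finset.mem_univ _, ha.2⟩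
  · intro a _ b _ hab
    exact (S.orderIsoOfFin hS).injective (Subtype.ext hab)
  · intro i hi
    rw [Finset.mem_filter] at hi
    have hiS : i ∈ S := hsub i hi.2
    refine ⟨(S.orderIsoOfFin hS).symm ⟨i, hiS⟩, ?_, ?_⟩
    · rw [Finset.mem_filter]
      refine ⟨Finset.mem_univ _, ?_⟩
      have : (S.orderIsoOfFin hS) ((S.orderIsoOfFin hS).symm ⟨i, hiS⟩) = ⟨i, hiS⟩ :=
        (S.orderIsoOfFin hS).apply_symm_apply _
      rw [this]
      exact hi.2
    · have : (S.orderIsoOfFin hS) ((S.orderIsoOfFin hS).symm ⟨i, hiS⟩) = ⟨i, hiS⟩ :=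
        (S.orderIsoOfFin hS).apply_symm_apply _
      rw [this]


lemma fiber_card (x : ℕ → ℕ) (hx : ∀ m, 1 ≤ m → x m ≤ x (m + 1)) {n : ℕ}
    (k N : ℕ) (hk : k ≤ n) (hN : x (n+1) ≤ N)
    (S : Finset (Fin n)) (hS : S.card = k) :
    ((Fintype.piFinset fun _ : Fin n => Finset.Icc 1 N).filter
      (fun f => Ok x k f ∧ Finset.univ.filter (fun i => f i ≤ x (k+1)) = S)).card
    = (pfSet x k).card * (N - x (k+1)) ^ (n - k) := by
  classical
  have hSc : Sᶜ.card = n - k := by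
    rw [Finset.card_compl, hS]; simp
  set e := S.orderIsoOfFin hS with he
  set ec := Sᶜ.orderIsoOfFin hSc with hec
  have hxk1 : x (k+1) ≤ N := le_trans (xmono x hx (k+1) (n+1) (by omega) (by omega)) hN
  have hstep : (pfSet x k ×ˢ Fintype.piFinset
      (fun _ : Fin (n-k) => Finset.Icc (x (k+1) + 1) N)).card
      = (pfSet x k).card * (N - x (k+1)) ^ (n - k) := by
    rw [Finset.card_product, Fintype.card_piFinset]
    simp only [Nat.card_Icc, Finset.prod_const, Finset.card_univ, Fintype.card_fin]
    congr 2
    omega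
  rw [← hstep]
  apply Finset.card_bij' (fun f _ => ((fun a => f (e a)), (fun b => f (ec b))))
    (fun pg _ => (fun i => if h : i ∈ S then pg.1 (e.symm ⟨i, h⟩)
      else pg.2 (ec.symm ⟨i, Finset.mem_compl.mpr h⟩)))
  · -- hi : image in product
    intro f hf
    rw [Finset.mem_filter] at hf
    obtain ⟨hfT, hOk, hD⟩ := hf
    rw [Fintype.mem_piFinset] at hfT
    simp only [Finset.mem_Icc] at hfT
    have key : ∀ i, i ∈ S ↔ f i ≤ x (k+1) := by
      intro i
      rw [← hD, Finset.mem_filter]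
      simp
    have hfS : ∀ i ∈ S, f i ≤ x k := by
      rcases Nat.eq_zero_or_pos k with h0 | hpos
      · intro i hi
        have : S = ∅ := Finset.card_eq_zero.mp (by omega)
        simp [this] at hi
      · have hsub : Finset.univ.filter (fun i => f i ≤ x k) ⊆ S := by
          intro i hi
          rw [Finset.mem_filter] at hi
          exact (key i).mpr (le_trans hi.2 (hx k hpos))
        have hge : k ≤ (Finset.univ.filter (fun i => f i ≤ x k)).card :=
          hOk k (Finset.mem_Icc.mpr ⟨hpos, le_rfl⟩)
        have heq : Finset.univ.filter (fun i => f i ≤ x k) = S :=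
          Finset.eq_of_subset_of_card_le hsub (by omega)
        intro i hi
        rw [← heq, Finset.mem_filter] at hi
        exact hi.2
    rw [Finset.mem_product]
    constructor
    · -- first component in pfSet
      rw [pfSet, Finset.mem_filter]
      constructor
      · rw [Fintype.mem_piFinset]
        intro a
        rw [Finset.mem_Icc]
        exact ⟨(hfT _).1, hfS _ (e a).2⟩
      · constructor
        · intro a; exact (hfT _).1
        · intro j hj1 hjk
          have hsub : ∀ i, f i ≤ x j → i ∈ S := by
            intro i hij
            exact (key i).mpr (le_trans hij (xmono x hx j (k+1) hj1 (by omega)))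
          have := card_filter_iso S hS (fun i => f i ≤ x j) hsub
          rw [this]
          exact hOk j (Finset.mem_Icc.mpr ⟨hj1, hjk⟩)
    · rw [Fintype.mem_piFinset]
      intro b
      rw [Finset.mem_Icc]
      have hb : (ec b : Fin n) ∉ S := Finset.mem_compl.mp (ec b).2
      have : ¬ f (ec b) ≤ x (k+1) := fun hle => hb ((key _).mpr hle)
      show x (k+1) + 1 ≤ f (ec b) ∧ f (ec b) ≤ N
      exact ⟨by omega, (hfT _).2⟩
  · -- hj : reverse image in filter
    intro pg hpg
    rw [Finset.mem_product] at hpg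
    obtain ⟨hp, hg⟩ := hpg
    rw [pfSet, Finset.mem_filter] at hp
    obtain ⟨hpmem, hpIsPF⟩ := hp
    rw [Fintype.mem_piFinset] at hpmem hg
    simp only [Finset.mem_Icc] at hpmem hg
    set J : Fin n → ℕ := (fun i => if h : i ∈ S then pg.1 (e.symm ⟨i, h⟩)
      else pg.2 (ec.symm ⟨i, Finset.mem_compl.mpr h⟩)) with hJ
    have hkpos : ∀ i, i ∈ S → 1 ≤ k := by
      intro i hi
      rcases Nat.eq_zero_or_pos k with h0 | hpos
      · have : S = ∅ := Finset.card_eq_zero.mp (by omega)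
        simp [this] at hi
      · exact hpos
    have hJin : ∀ i (h : i ∈ S), 1 ≤ J i ∧ J i ≤ x k := by
      intro i h
      rw [hJ]; simp only [dif_pos h]
      exact hpmem _
    have hJout : ∀ i, i ∉ S → x (k+1) + 1 ≤ J i ∧ J i ≤ N := by
      intro i h
      rw [hJ]; simp only [dif_neg h]
      exact hg _
    have hxkN : 1 ≤ k → x k ≤ N :=
      fun hpos => le_trans (xmono x hx k (n+1) hpos (by omega)) hN
    have hkey : ∀ i, i ∈ S ↔ J i ≤ x (k+1) := by
      intro i
      constructor
      · intro h
        exact le_trans (hJin i h).2 (xmono x hx k (k+1) (hkpos i h) (by omega))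
      · intro h
        by_contra hns
        have := hJout i hns
        omega
    have hJe : ∀ a, J (e a) = pg.1 a := by
      intro a
      rw [hJ]
      simp only [dif_pos (e a).2]
      congr 1
      have : (⟨(e a : Fin n), (e a).2⟩ : {y // y ∈ S}) = e a := Subtype.ext rfl
      rw [this, OrderIso.symm_apply_apply]
    rw [Finset.mem_filter]
    refine ⟨?_, ?_, ?_⟩
    · rw [Fintype.mem_piFinset]
      intro i
      rw [Finset.mem_Icc]
      by_cases h : i ∈ S
      · have := hJin i h
        exact ⟨this.1, le_trans this.2 (hxkN (hkpos i h))⟩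
      · have := hJout i h
        exact ⟨by omega, this.2⟩
    · -- Ok
      intro j hj
      rw [Finset.mem_Icc] at hj
      have hsub : ∀ i, J i ≤ x j → i ∈ S := by
        intro i hij
        exact (hkey i).mpr (le_trans hij (xmono x hx j (k+1) hj.1 (by omega)))
      rw [← card_filter_iso S hS (fun i => J i ≤ x j) hsub]
      have hcongr : (Finset.univ.filter (fun a : Fin k => J (e a) ≤ x j))
          = (Finset.univ.filter (fun a : Fin k => pg.1 a ≤ x j)) := by
        apply Finset.filter_congr
        intro a _
        rw [hJe a]
      rw [hcongr]
      exact hpIsPF.2 j hj.1 hj.2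
    · -- D = S
      ext i
      rw [Finset.mem_filter]
      constructor
      · intro h; exact (hkey i).mpr h.2
      · intro h; exact ⟨Finset.mem_univ _, (hkey i).mp h⟩
  · -- left inverse
    intro f hf
    funext i
    by_cases h : i ∈ S
    · simp only [dif_pos h]
      congr 1
      exact congrArg Subtype.val (e.apply_symm_apply ⟨i, h⟩)
    · simp only [dif_neg h]
      congr 1
      exact congrArg Subtype.val (ec.apply_symm_apply ⟨i, Finset.mem_compl.mpr h⟩)
  · -- right inverse
    intro pg hpg
    ext
    · -- first component
      next a =>
      simp only [dif_pos (e a).2]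
      congr 1
      have : (⟨(e a : Fin n), (e a).2⟩ : {y // y ∈ S}) = e a := Subtype.ext rfl
      rw [this, OrderIso.symm_apply_apply]
    · next b =>
      have hb : (ec b : Fin n) ∉ S := Finset.mem_compl.mp (ec b).2
      simp only [dif_neg hb]
      congr 1
      have : (⟨(ec b : Fin n), Finset.mem_compl.mpr hb⟩ : {y // y ∈ Sᶜ}) = ec b :=
        Subtype.ext rfl
      rw [this, OrderIso.symm_apply_apply]

lemma count (x : ℕ → ℕ) (hx : ∀ m, 1 ≤ m → x m ≤ x (m + 1)) (n N : ℕ)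
    (hN : x (n+1) ≤ N) :
    N ^ n = ∑ k ∈ Finset.range (n+1),
      n.choose k * ((pfSet x k).card * (N - x (k+1)) ^ (n - k)) := by
  classical
  have hT : (Fintype.piFinset fun _ : Fin n => Finset.Icc 1 N).card = N ^ n := by
    rw [Fintype.card_piFinset]
    simp [Nat.card_Icc]
  rw [← hT]
  rw [Finset.card_eq_sum_card_fiberwise (f := fun f => lev x f)
    (t := Finset.range (n+1)) (fun f _ => Finset.mem_range.mpr (by
      show lev x f < n + 1
      have := (lev_spec x f).1; omega))]
  apply Finset.sum_congr rfl
  intro k hk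
  rw [Finset.mem_range] at hk
  have hkn : k ≤ n := by omega
  -- rewrite the fiber using lev_eq_iff
  have hfib : ((Fintype.piFinset fun _ : Fin n => Finset.Icc 1 N).filter
      (fun f => lev x f = k))
      = ((Fintype.piFinset fun _ : Fin n => Finset.Icc 1 N).filter
      (fun f => Ok x k f ∧ (Finset.univ.filter (fun i => f i ≤ x (k+1))).card = k)) := by
    apply Finset.filter_congr
    intro f _
    simpa using lev_eq_iff x hx f hkn
  rw [hfib]
  rw [Finset.card_eq_sum_card_fiberwise
    (f := fun f => Finset.univ.filter (fun i => f i ≤ x (k+1)))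
    (t := Finset.powersetCard k Finset.univ) (fun f hf => by
      rw [Finset.mem_coe, Finset.mem_filter] at hf
      exact Finset.mem_powersetCard.mpr ⟨Finset.subset_univ _, hf.2.2⟩)]
  have hconst : ∀ S ∈ Finset.powersetCard k (Finset.univ : Finset (Fin n)),
      ((((Fintype.piFinset fun _ : Fin n => Finset.Icc 1 N).filter
        (fun f => Ok x k f ∧ (Finset.univ.filter (fun i => f i ≤ x (k+1))).card = k)).filter
        (fun f => Finset.univ.filter (fun i => f i ≤ x (k+1)) = S)).card
      = (pfSet x k).card * (N - x (k+1)) ^ (n - k)) := by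
    intro S hSmem
    obtain ⟨-, hS⟩ := Finset.mem_powersetCard.mp hSmem
    rw [Finset.filter_filter]
    have : ((Fintype.piFinset fun _ : Fin n => Finset.Icc 1 N).filter
        (fun f => (Ok x k f ∧ (Finset.univ.filter (fun i => f i ≤ x (k+1))).card = k) ∧
          Finset.univ.filter (fun i => f i ≤ x (k+1)) = S))
        = ((Fintype.piFinset fun _ : Fin n => Finset.Icc 1 N).filter
        (fun f => Ok x k f ∧ Finset.univ.filter (fun i => f i ≤ x (k+1)) = S)) := by
      apply Finset.filter_congr
      intro f _
      constructor
      · rintro ⟨⟨h1, h2⟩, h3⟩; exact ⟨h1, h3⟩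
      · rintro ⟨h1, h3⟩; exact ⟨⟨h1, h3 ▸ hS⟩, h3⟩
    rw [this]
    exact fiber_card x hx k N hkn hN S hS
  rw [Finset.sum_congr rfl hconst, Finset.sum_const, Finset.card_powersetCard,
    Finset.card_univ, Fintype.card_fin, smul_eq_mul]

end PFAux

open PFAux Polynomial

theorem pf_alternating_sum_eq_zero (x : ℕ → ℕ)
    (hx : ∀ m, 1 ≤ m → x m ≤ x (m + 1)) (n : ℕ) (hn : 1 ≤ n) :
    ∑ k ∈ Finset.range (n + 1),
      (-1 : ℤ) ^ (n - k + 1) * (n.choose k : ℤ) * (PF x k : ℤ) *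
        (x (k + 1) : ℤ) ^ (n - k) = 0 := by
  classical
  set p : Polynomial ℤ :=
    (∑ k ∈ Finset.range (n+1),
      Polynomial.C ((n.choose k : ℤ) * (PF x k : ℤ)) *
        (Polynomial.X - Polynomial.C ((x (k+1) : ℤ))) ^ (n - k)) - Polynomial.X ^ n
    with hp
  have heval : ∀ z : ℤ, p.eval z
      = (∑ k ∈ Finset.range (n+1),
          ((n.choose k : ℤ) * (PF x k : ℤ)) * (z - (x (k+1) : ℤ)) ^ (n - k)) - z ^ n := by
    intro z
    rw [hp]
    simp [Polynomial.eval_finset_sum]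
  have hroot : ∀ z : ℤ, (x (n+1) : ℤ) ≤ z → p.IsRoot z := by
    intro z hz
    have hz0 : 0 ≤ z := le_trans (by positivity) hz
    set N : ℕ := z.toNat with hNdef
    have hzN : (N : ℤ) = z := Int.toNat_of_nonneg hz0
    have hNx : x (n+1) ≤ N := by omega
    have hcount := count x hx n N hNx
    have hcast : ∀ k ∈ Finset.range (n+1),
        ((n.choose k * ((pfSet x k).card * (N - x (k+1)) ^ (n - k)) : ℕ) : ℤ)
        = ((n.choose k : ℤ) * (PF x k : ℤ)) * ((N : ℤ) - (x (k+1) : ℤ)) ^ (n - k) := by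
      intro k hk
      rw [Finset.mem_range] at hk
      have hxk : x (k+1) ≤ N :=
        le_trans (xmono x hx (k+1) (n+1) (by omega) (by omega)) hNx
      push_cast [Nat.cast_sub hxk, PF_eq_card]
      ring
    rw [Polynomial.IsRoot, heval, ← hzN]
    rw [← Finset.sum_congr rfl hcast, ← Nat.cast_sum]
    rw [← Nat.cast_pow, ← hcount]
    exact sub_self _
  have hp0 : p = 0 :=
    p.eq_zero_of_infinite_isRoot
      (Set.Infinite.mono hroot (Set.Ici_infinite ((x (n+1) : ℤ))))
  have h0 : p.eval 0 = 0 := by rw [hp0]; simp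
  rw [heval 0] at h0
  have hzn : (0 : ℤ) ^ n = 0 := zero_pow (by omega)
  rw [hzn, sub_zero] at h0
  calc ∑ k ∈ Finset.range (n + 1),
      (-1 : ℤ) ^ (n - k + 1) * (n.choose k : ℤ) * (PF x k : ℤ) *
        (x (k + 1) : ℤ) ^ (n - k)
      = - ∑ k ∈ Finset.range (n+1),
          ((n.choose k : ℤ) * (PF x k : ℤ)) * ((0 : ℤ) - (x (k+1) : ℤ)) ^ (n - k) := by
        rw [← Finset.sum_neg_distrib]
        apply Finset.sum_congr rfl
        intro k _
        rw [zero_sub, neg_pow]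
        ring
    _ = 0 := by rw [h0, neg_zero]
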